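/- Let 0 < μ ≤ T, j₀ ∈ {0,1}, h ∈ ℕ, and let ω_{j₀},...,ω_h be real numbers with ω_j = 0 if and only if j = 0 and {ω_j, −ω_j} ≠ {ω_l, −ω_l} for j ≠ l. Let ξ > 0 be such that ∫_t^{t+T} α(τ)v(τ)v(τ)ᵀ dτ ≥ ξ Id_{2h+1−j₀} for every (T,μ)-signal α and every t ≥ 0. Let (α^{(n)})_{n∈ℕ} be a sequence of (T,μ)-signals, (ν_n) an increasing sequence of positive reals with ν_n → +∞, and define α^C_n(t) = α^{(n)}(ν_n t) v(ν_n t) v(ν_n t)ᵀ. Then every weak-star limit point C⋆ of (α^C_n) in L^∞([0,∞), M_{2h+1−j₀}(ℝ)) satisfies C⋆(t) ≥ (ξ/T) Id_{2h+1−j₀} for almost every t ≥ 0. -/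

import Mathlib

open MeasureTheory Filter Matrix

noncomputable section

/-- A `(T,μ)`-signal: a measurable function with values in `[0,1]` whose integral over any
window `[t, t+T]` with `t ≥ 0` is at least `μ`. -/
def IsPESignal (T μ : ℝ) (α : ℝ → ℝ) : Prop :=
  Measurable α ∧ (∀ t, α t ∈ Set.Icc (0:ℝ) 1) ∧
    ∀ t : ℝ, 0 ≤ t → μ ≤ ∫ s in t..(t + T), α s

/-- The vector `v(t) ∈ ℝ^{2h+1-j₀}`: its components are `1` (present only when `j₀ = 0`,
corresponding to `ω₀ = 0`) followed by the pairs `e^{ω_j A₀ t} b₀ = (sin(ω_j t), cos(ω_j t))`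
for `j = 1, …, h`, where `A₀ = [[0,1],[-1,0]]` and `b₀ = (0,1)ᵀ`. -/
def pev (j₀ h : ℕ) (ω : ℕ → ℝ) (t : ℝ) : Fin (2 * h + 1 - j₀) → ℝ := fun i =>
  if (i : ℕ) + j₀ = 0 then 1
  else if ((i : ℕ) + j₀) % 2 = 1 then Real.sin (ω (((i : ℕ) + j₀ + 1) / 2) * t)
  else Real.cos (ω (((i : ℕ) + j₀) / 2) * t)

lemma pev_continuous (j₀ h : ℕ) (ω : ℕ → ℝ) (i : Fin (2 * h + 1 - j₀)) :
    Continuous fun t => pev j₀ h ω t i := by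
  unfold pev
  split_ifs with h1 h2
  · exact continuous_const
  · exact Real.continuous_sin.comp (continuous_const.mul continuous_id)
  · exact Real.continuous_cos.comp (continuous_const.mul continuous_id)

lemma pev_abs_le (j₀ h : ℕ) (ω : ℕ → ℝ) (t : ℝ) (i : Fin (2 * h + 1 - j₀)) :
    |pev j₀ h ω t i| ≤ 1 := by
  unfold pev
  split_ifs with h1 h2
  · simp
  · exact abs_le.2 ⟨Real.neg_one_le_sin _, Real.sin_le_one _⟩
  · exact abs_le.2 ⟨Real.neg_one_le_cos _, Real.cos_le_one _⟩

lemma intervalIntegrable_of_bound {f : ℝ → ℝ} (hf : Measurable f) (B : ℝ)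
    (hB : ∀ t, |f t| ≤ B) (a b : ℝ) : IntervalIntegrable f volume a b := by
  rw [intervalIntegrable_iff]
  refine Integrable.mono (g := fun _ => B) ?_ hf.aestronglyMeasurable.restrict ?_
  · exact integrableOn_const measure_Ioc_lt_top.ne
  · exact Eventually.of_forall fun t => by
      simpa [Real.norm_eq_abs] using (hB t).trans (le_abs_self B)

lemma integrableOn_of_bound_Icc {f : ℝ → ℝ} (hf : Measurable f) (B : ℝ)
    (hB : ∀ t, |f t| ≤ B) (a b : ℝ) : IntegrableOn f (Set.Icc a b) := by
  refine Integrable.mono (g := fun _ => B) ?_ hf.aestronglyMeasurable.restrict ?_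
  · exact integrableOn_const measure_Icc_lt_top.ne
  · exact Eventually.of_forall fun t => by
      simpa [Real.norm_eq_abs] using (hB t).trans (le_abs_self B)

lemma abs_triple_le_one {u w z : ℝ} (h0 : 0 ≤ u) (h1 : u ≤ 1) (h2 : |w| ≤ 1) (h3 : |z| ≤ 1) :
    |u * (w * z)| ≤ 1 := by
  rw [abs_mul, abs_mul, abs_of_nonneg h0]
  have hw := abs_nonneg w
  have hz := abs_nonneg z
  have hwz : |w| * |z| ≤ 1 := by nlinarith
  nlinarith [mul_nonneg hw hz]

lemma sum_sum_mul_eq {n : ℕ} (x w : Fin n → ℝ) (c : ℝ) :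
    ∑ i, ∑ j, x i * x j * (c * (w i * w j)) = c * (dotProduct x w)^2 := by
  rw [sq, dotProduct, Finset.sum_mul_sum, Finset.mul_sum]
  refine Finset.sum_congr rfl fun i _ => ?_
  rw [Finset.mul_sum]
  refine Finset.sum_congr rfl fun j _ => by ring

lemma integral_double_sum {n : ℕ} (x : Fin n → ℝ) (μ : Measure ℝ)
    (F : Fin n → Fin n → ℝ → ℝ) (hF : ∀ i j, Integrable (F i j) μ) :
    ∑ i, ∑ j, x i * x j * ∫ t, F i j t ∂μ = ∫ t, ∑ i, ∑ j, x i * x j * F i j t ∂μ := by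
  have h1 : ∀ i : Fin n, ∑ j, x i * x j * ∫ t, F i j t ∂μ
      = ∫ t, ∑ j, x i * x j * F i j t ∂μ := by
    intro i
    calc ∑ j, x i * x j * ∫ t, F i j t ∂μ = ∑ j, ∫ t, x i * x j * F i j t ∂μ := by
          refine Finset.sum_congr rfl fun j _ => ?_
          rw [integral_const_mul]
      _ = ∫ t, ∑ j, x i * x j * F i j t ∂μ :=
          (integral_finset_sum _ fun j _ => (hF i j).const_mul _).symm
  calc ∑ i, ∑ j, x i * x j * ∫ t, F i j t ∂μ = ∑ i, ∫ t, ∑ j, x i * x j * F i j t ∂μ :=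
        Finset.sum_congr rfl fun i _ => h1 i
    _ = ∫ t, ∑ i, ∑ j, x i * x j * F i j t ∂μ :=
        (integral_finset_sum _ fun i _ =>
          integrable_finset_sum _ fun j _ => (hF i j).const_mul _).symm

set_option maxHeartbeats 2000000 in
/-- Lemma 2(2), second part: if `ξ > 0` is such that
`∫_t^{t+T} α(τ) v(τ)v(τ)ᵀ dτ ≥ ξ Id` for every `(T,μ)`-signal `α` and every `t ≥ 0`,
`α⁽ⁿ⁾` are `(T,μ)`-signals, `ν_n ↗ ∞`, `α^C_n(t) = α⁽ⁿ⁾(ν_n t) v(ν_n t) v(ν_n t)ᵀ`, and `C⋆`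
is a weak-star limit point (entrywise, along a subsequence `φ`) of `(α^C_n)` in
`L^∞([0,∞), M_{2h+1-j₀}(ℝ))`, then `C⋆(t) ≥ (ξ/T) Id` for almost every `t ≥ 0`. -/
theorem weakStar_limit_of_rescaled_matrix_signals (T μ : ℝ) (hμ : 0 < μ) (hμT : μ ≤ T)
    (j₀ h : ℕ) (hj₀ : j₀ = 0 ∨ j₀ = 1) (hh : 1 ≤ h) (hj₀h : j₀ ≤ h)
    (ω : ℕ → ℝ)
    (hω0 : ∀ j, j₀ ≤ j → j ≤ h → (ω j = 0 ↔ j = 0))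
    (hωdist : ∀ j l, j₀ ≤ j → j ≤ h → j₀ ≤ l → l ≤ h → j ≠ l → ω j ≠ ω l ∧ ω j ≠ -ω l)
    (ξ : ℝ) (hξ : 0 < ξ)
    (hξPE : ∀ α : ℝ → ℝ, IsPESignal T μ α → ∀ t : ℝ, 0 ≤ t →
      ∀ x : Fin (2 * h + 1 - j₀) → ℝ,
        ξ * (∑ i, (x i) ^ 2) ≤
          ∫ s in t..(t + T), α s * (dotProduct x (pev j₀ h ω s)) ^ 2)
    (α : ℕ → ℝ → ℝ) (hα : ∀ n, IsPESignal T μ (α n))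
    (ν : ℕ → ℝ) (hν0 : ∀ n, 0 < ν n) (hνmono : StrictMono ν)
    (hνtop : Tendsto ν atTop atTop)
    (C : ℝ → Matrix (Fin (2 * h + 1 - j₀)) (Fin (2 * h + 1 - j₀)) ℝ)
    (hCmeas : ∀ i j, Measurable fun t => C t i j)
    (φ : ℕ → ℕ) (hφ : StrictMono φ)
    (hlim : ∀ g : ℝ → ℝ, IntegrableOn g (Set.Ici (0:ℝ)) →
      ∀ i j : Fin (2 * h + 1 - j₀),
        Tendsto (fun k => ∫ s in Set.Ici (0:ℝ),
            (α (φ k) (ν (φ k) * s) * (pev j₀ h ω (ν (φ k) * s) i *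
              pev j₀ h ω (ν (φ k) * s) j)) * g s) atTop
          (nhds (∫ s in Set.Ici (0:ℝ), C s i j * g s))) :
    ∀ᵐ t ∂(volume.restrict (Set.Ici (0:ℝ))),
      ∀ x : Fin (2 * h + 1 - j₀) → ℝ,
        (ξ / T) * (∑ i, (x i) ^ 2) ≤ dotProduct x ((C t).mulVec x) := by
  classical
  have hT : 0 < T := lt_of_lt_of_le hμ hμT
  have hvm : ∀ i : Fin (2 * h + 1 - j₀), Measurable fun t => pev j₀ h ω t i :=
    fun i => (pev_continuous j₀ h ω i).measurable
  -- Step 1 : a bound on set integrals of the entries of C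
  have hsetbd : ∀ (A : Set ℝ), MeasurableSet A → A ⊆ Set.Ici (0:ℝ) → volume A < ⊤ →
      ∀ i j, |∫ t in A, C t i j| ≤ (volume A).toReal := by
    intro A hA hAsub hAfin i j
    set g : ℝ → ℝ := A.indicator (fun _ => 1) with hgdef
    have hgint : IntegrableOn g (Set.Ici (0:ℝ)) := by
      refine (integrable_indicator_iff hA).2 ?_
      exact integrableOn_const (lt_of_le_of_lt (Measure.restrict_apply_le _ _) hAfin).ne
    have hrw : ∀ F : ℝ → ℝ, (∫ s in Set.Ici (0:ℝ), F s * g s) = ∫ t in A, F t := by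
      intro F
      have h1 : (fun s => F s * g s) = A.indicator F := by
        funext s; by_cases hs : s ∈ A <;> simp [hgdef, hs]
      rw [h1, integral_indicator hA, Measure.restrict_restrict hA, Set.inter_eq_left.mpr hAsub]
    have hkey := hlim g hgint i j
    rw [hrw (fun s => C s i j)] at hkey
    refine le_of_tendsto hkey.abs (Eventually.of_forall fun k => ?_)
    rw [hrw _]
    have hb : ‖∫ t in A, α (φ k) (ν (φ k) * t) *
            (pev j₀ h ω (ν (φ k) * t) i * pev j₀ h ω (ν (φ k) * t) j)‖
        ≤ 1 * (volume A).toReal := by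
      refine norm_setIntegral_le_of_norm_le_const_ae' (μ := volume) hAfin
        (Eventually.of_forall fun t _ => ?_)
      have h1 := (hα (φ k)).2.1 (ν (φ k) * t)
      rw [Real.norm_eq_abs]
      exact abs_triple_le_one h1.1 h1.2 (pev_abs_le _ _ _ _ _) (pev_abs_le _ _ _ _ _)
    rw [Real.norm_eq_abs, one_mul] at hb
    exact hb
  -- Step 2 : the entries of C are a.e. bounded by 1 on [0,∞)
  have hCb : ∀ i j, ∀ᵐ t ∂(volume.restrict (Set.Ici (0:ℝ))), |C t i j| ≤ 1 := by
    intro i j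
    have main : ∀ σ : ℝ, σ = 1 ∨ σ = -1 → ∀ n : ℕ,
        volume {t : ℝ | t ∈ Set.Icc (0:ℝ) (n:ℝ) ∧
          1 + ((n:ℝ)+1)⁻¹ ≤ σ * C t i j ∧ σ * C t i j ≤ (n:ℝ)} = 0 := by
      intro σ hσ n
      set S := {t : ℝ | t ∈ Set.Icc (0:ℝ) (n:ℝ) ∧
          1 + ((n:ℝ)+1)⁻¹ ≤ σ * C t i j ∧ σ * C t i j ≤ (n:ℝ)} with hS
      have hm : Measurable fun t => σ * C t i j := (hCmeas i j).const_mul σ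
      have hmeas : MeasurableSet S := by
        have hSeq : S = Set.Icc (0:ℝ) (n:ℝ) ∩
            ({t | 1 + ((n:ℝ)+1)⁻¹ ≤ σ * C t i j} ∩ {t | σ * C t i j ≤ (n:ℝ)}) := by
          ext t; simp only [hS, Set.mem_setOf_eq, Set.mem_inter_iff, and_assoc]
        rw [hSeq]
        exact measurableSet_Icc.inter
          ((measurableSet_le measurable_const hm).inter (measurableSet_le hm measurable_const))
      have hsub : S ⊆ Set.Ici (0:ℝ) := fun t ht => ht.1.1
      have hfin : volume S < ⊤ :=
        lt_of_le_of_lt (measure_mono (fun t ht => ht.1)) measure_Icc_lt_top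
      have hεpos : (0:ℝ) < ((n:ℝ)+1)⁻¹ := by positivity
      have habs : ∀ t, |C t i j| = |σ * C t i j| := by
        intro t; rcases hσ with rfl | rfl <;> simp [abs_mul]
      have hint : IntegrableOn (fun t => C t i j) S := by
        refine Integrable.mono (g := fun _ => (n:ℝ)) (integrableOn_const hfin.ne)
          ((hCmeas i j).aestronglyMeasurable.restrict) ?_
        filter_upwards [ae_restrict_mem hmeas] with t ht
        have hpos : 0 < σ * C t i j := lt_of_lt_of_le (by positivity) ht.2.1
        rw [Real.norm_eq_abs, Real.norm_eq_abs, habs t, abs_of_pos hpos]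
        exact ht.2.2.trans (le_abs_self _)
      have hlow : (1 + ((n:ℝ)+1)⁻¹) * (volume S).toReal ≤ ∫ t in S, σ * C t i j :=
        by have := setIntegral_ge_of_const_le hmeas hfin.ne (fun t ht => ht.2.1) (hint.const_mul σ)
           rw [smul_eq_mul, mul_comm] at this; exact this
      have hup : |∫ t in S, C t i j| ≤ (volume S).toReal := hsetbd S hmeas hsub hfin i j
      have hσint : (∫ t in S, σ * C t i j) = σ * ∫ t in S, C t i j := integral_const_mul σ _
      have hσint' : (∫ t in S, σ * C t i j) ≤ |∫ t in S, C t i j| := by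
        rw [hσint]
        rcases hσ with rfl | rfl
        · simpa using le_abs_self (∫ t in S, C t i j)
        · rw [neg_one_mul]
          exact neg_le_abs _
      have hy : (0:ℝ) ≤ (volume S).toReal := ENNReal.toReal_nonneg
      have hzero : (volume S).toReal = 0 := by nlinarith [hlow.trans (hσint'.trans hup)]
      rcases (ENNReal.toReal_eq_zero_iff _).1 hzero with h0 | h0
      · exact h0
      · exact absurd h0 hfin.ne
    have hcover : {t : ℝ | t ∈ Set.Ici (0:ℝ) ∧ 1 < |C t i j|} ⊆
        ⋃ n : ℕ, ({t : ℝ | t ∈ Set.Icc (0:ℝ) (n:ℝ) ∧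
            1 + ((n:ℝ)+1)⁻¹ ≤ 1 * C t i j ∧ 1 * C t i j ≤ (n:ℝ)} ∪
          {t : ℝ | t ∈ Set.Icc (0:ℝ) (n:ℝ) ∧
            1 + ((n:ℝ)+1)⁻¹ ≤ (-1) * C t i j ∧ (-1) * C t i j ≤ (n:ℝ)}) := by
      rintro t ⟨ht0, htC⟩
      obtain ⟨n, hn⟩ := exists_nat_ge (max t (max (|C t i j|) ((|C t i j| - 1)⁻¹)))
      have hn1 : t ≤ (n:ℝ) := le_trans (le_max_left _ _) hn
      have hn2 : |C t i j| ≤ (n:ℝ) := le_trans (le_max_of_le_right (le_max_left _ _)) hn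
      have hn3 : ((n:ℝ)+1)⁻¹ ≤ |C t i j| - 1 := by
        have h1 : (0:ℝ) < |C t i j| - 1 := by linarith
        have h2 : (|C t i j| - 1)⁻¹ ≤ (n:ℝ) + 1 :=
          le_trans (le_trans (le_max_of_le_right (le_max_right _ _)) hn) (by linarith)
        calc ((n:ℝ)+1)⁻¹ ≤ ((|C t i j| - 1)⁻¹)⁻¹ := by
              apply inv_anti₀ (by positivity) h2
          _ = |C t i j| - 1 := inv_inv _
      rw [Set.mem_iUnion]
      refine ⟨n, ?_⟩
      rcases le_or_gt 0 (C t i j) with hc | hc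
      · left
        have habs : |C t i j| = C t i j := abs_of_nonneg hc
        exact ⟨⟨ht0, hn1⟩, by rw [one_mul]; linarith, by rw [one_mul]; linarith⟩
      · right
        have habs : |C t i j| = -C t i j := abs_of_neg hc
        exact ⟨⟨ht0, hn1⟩, by rw [neg_one_mul]; linarith, by rw [neg_one_mul]; linarith⟩
    have hbadnull : volume {t : ℝ | t ∈ Set.Ici (0:ℝ) ∧ 1 < |C t i j|} = 0 := by
      refine measure_mono_null hcover ?_
      refine measure_iUnion_null fun n => measure_union_null ?_ ?_
      · exact main 1 (Or.inl rfl) n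
      · exact main (-1) (Or.inr rfl) n
    rw [ae_iff, Measure.restrict_apply]
    · refine measure_mono_null (fun t ht => ?_) hbadnull
      exact ⟨ht.2, not_le.1 ht.1⟩
    · exact (measurableSet_le (hCmeas i j).abs measurable_const).compl
  have hCb' : ∀ᵐ t ∂(volume.restrict (Set.Ici (0:ℝ))), ∀ i j, |C t i j| ≤ 1 :=
    ae_all_iff.2 fun i => ae_all_iff.2 fun j => hCb i j
  -- Step 3 : the bounded modification D of C
  set D : ℝ → Fin (2 * h + 1 - j₀) → Fin (2 * h + 1 - j₀) → ℝ :=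
    fun t i j => if 0 ≤ t ∧ |C t i j| ≤ 1 then C t i j else 0 with hDdef
  have hDmeas : ∀ i j, Measurable fun t => D t i j := by
    intro i j
    refine Measurable.ite ?_ (hCmeas i j) measurable_const
    exact (measurableSet_Ici (a := (0:ℝ))).inter
      (measurableSet_le (hCmeas i j).abs measurable_const)
  have hDb : ∀ t i j, |D t i j| ≤ 1 := by
    intro t i j
    simp only [hDdef]
    split_ifs with hc
    · exact hc.2
    · simp
  have hDC : ∀ᵐ t ∂(volume.restrict (Set.Ici (0:ℝ))), ∀ i j, D t i j = C t i j := by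
    filter_upwards [hCb', ae_restrict_mem measurableSet_Ici] with t h1 h2 i j
    simp only [hDdef]
    rw [if_pos ⟨h2, h1 i j⟩]
  -- Step 4 : the key interval estimate
  have hkey : ∀ (x : Fin (2 * h + 1 - j₀) → ℝ) (a b : ℝ), 0 ≤ a → a ≤ b →
      ((b - a) / T) * (ξ * ∑ i, (x i)^2) ≤ ∫ t in Set.Icc a b, ∑ i, ∑ j, x i * x j * D t i j := by
    intro x a b ha hab
    have hsub : Set.Icc a b ⊆ Set.Ici (0:ℝ) := fun t ht => le_trans ha ht.1
    have hfinIcc : (volume.restrict (Set.Ici (0:ℝ))) (Set.Icc a b) < ⊤ :=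
      lt_of_le_of_lt (Measure.restrict_apply_le _ _) measure_Icc_lt_top
    set g : ℝ → ℝ := (Set.Icc a b).indicator (fun _ => 1) with hgdef
    have hgint : IntegrableOn g (Set.Ici (0:ℝ)) :=
      (integrable_indicator_iff measurableSet_Icc).2 (integrableOn_const hfinIcc.ne)
    have hrw : ∀ F : ℝ → ℝ, (∫ s in Set.Ici (0:ℝ), F s * g s) = ∫ t in Set.Icc a b, F t := by
      intro F
      have h1 : (fun s => F s * g s) = (Set.Icc a b).indicator F := by
        funext s; by_cases hs : s ∈ Set.Icc a b <;> simp [hgdef, hs]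
      rw [h1, integral_indicator measurableSet_Icc, Measure.restrict_restrict measurableSet_Icc,
        Set.inter_eq_left.mpr hsub]
    have hCint : ∀ i j, IntegrableOn (fun t => C t i j) (Set.Icc a b) := by
      intro i j
      refine Integrable.mono (g := fun _ => (1:ℝ))
        (integrableOn_const measure_Icc_lt_top.ne)
        ((hCmeas i j).aestronglyMeasurable.restrict) ?_
      filter_upwards [ae_restrict_of_ae_restrict_of_subset hsub (hCb i j)] with t ht
      simpa [Real.norm_eq_abs] using ht
    have hprodm : ∀ (k : ℕ) (i j : Fin (2 * h + 1 - j₀)), Measurable (fun s =>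
        α (φ k) (ν (φ k) * s) * (pev j₀ h ω (ν (φ k) * s) i * pev j₀ h ω (ν (φ k) * s) j)) := by
      intro k i j
      have hm : Measurable fun s : ℝ => ν (φ k) * s := measurable_id.const_mul _
      exact ((hα (φ k)).1.comp hm).mul (((hvm i).comp hm).mul ((hvm j).comp hm))
    have hprodint : ∀ (k : ℕ) (i j : Fin (2 * h + 1 - j₀)), IntegrableOn (fun s =>
        α (φ k) (ν (φ k) * s) * (pev j₀ h ω (ν (φ k) * s) i * pev j₀ h ω (ν (φ k) * s) j))
        (Set.Icc a b) := by
      intro k i j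
      refine integrableOn_of_bound_Icc (hprodm k i j) 1 (fun s => ?_) a b
      have h1 := (hα (φ k)).2.1 (ν (φ k) * s)
      exact abs_triple_le_one h1.1 h1.2 (pev_abs_le _ _ _ _ _) (pev_abs_le _ _ _ _ _)
    -- the limit statement for the quadratic form
    have hTlim : Tendsto (fun k => ∫ t in Set.Icc a b,
        α (φ k) (ν (φ k) * t) * (dotProduct x (pev j₀ h ω (ν (φ k) * t)))^2) atTop
        (nhds (∫ t in Set.Icc a b, ∑ i, ∑ j, x i * x j * C t i j)) := by
      have h1 : ∀ i j, Tendsto (fun k => ∫ t in Set.Icc a b,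
          α (φ k) (ν (φ k) * t) * (pev j₀ h ω (ν (φ k) * t) i * pev j₀ h ω (ν (φ k) * t) j))
          atTop (nhds (∫ t in Set.Icc a b, C t i j)) := by
        intro i j
        have h0 := hlim g hgint i j
        rw [hrw (fun s => C s i j)] at h0
        exact h0.congr fun k => hrw _
      have h2 : Tendsto (fun k => ∑ i, ∑ j, x i * x j * ∫ t in Set.Icc a b,
          α (φ k) (ν (φ k) * t) * (pev j₀ h ω (ν (φ k) * t) i * pev j₀ h ω (ν (φ k) * t) j))
          atTop (nhds (∑ i, ∑ j, x i * x j * ∫ t in Set.Icc a b, C t i j)) :=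
        tendsto_finset_sum _ fun i _ => tendsto_finset_sum _ fun j _ => (h1 i j).const_mul _
      have h4 : ∑ i, ∑ j, x i * x j * ∫ t in Set.Icc a b, C t i j
          = ∫ t in Set.Icc a b, ∑ i, ∑ j, x i * x j * C t i j :=
        integral_double_sum x _ _ (fun i j => hCint i j)
      rw [h4] at h2
      refine h2.congr fun k => ?_
      rw [integral_double_sum x _ _ (fun i j => hprodint k i j)]
      have : (fun t => ∑ i, ∑ j, x i * x j *
          (α (φ k) (ν (φ k) * t) * (pev j₀ h ω (ν (φ k) * t) i * pev j₀ h ω (ν (φ k) * t) j)))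
          = fun t => α (φ k) (ν (φ k) * t) * (dotProduct x (pev j₀ h ω (ν (φ k) * t)))^2 :=
        funext fun t => sum_sum_mul_eq x _ _
      rw [this]
    -- the lower bound for the approximants
    have hGlb : ∀ k, ((⌊ν (φ k) * (b - a) / T⌋₊ : ℝ) / ν (φ k)) * (ξ * ∑ i, (x i)^2) ≤
        ∫ t in Set.Icc a b, α (φ k) (ν (φ k) * t) *
          (dotProduct x (pev j₀ h ω (ν (φ k) * t)))^2 := by
      intro k
      set n := φ k with hn
      set B : ℝ := (∑ i, |x i|)^2 with hB
      set Fn : ℝ → ℝ := fun τ => α n τ * (dotProduct x (pev j₀ h ω τ))^2 with hFn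
      have hdm : Measurable fun τ => dotProduct x (pev j₀ h ω τ) := by
        simp only [dotProduct]
        exact Finset.measurable_sum _ fun i _ => (hvm i).const_mul _
      have hFm : Measurable Fn := (hα n).1.mul (hdm.pow_const 2)
      have hFb : ∀ τ, |Fn τ| ≤ B := by
        intro τ
        have hdp : |dotProduct x (pev j₀ h ω τ)| ≤ ∑ i, |x i| := by
          refine (Finset.abs_sum_le_sum_abs _ _).trans ?_
          refine Finset.sum_le_sum fun i _ => ?_
          rw [abs_mul]
          have h2 := pev_abs_le j₀ h ω τ i
          nlinarith [abs_nonneg (x i)]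
        have hsq : (dotProduct x (pev j₀ h ω τ))^2 ≤ B := by
          rw [hB, ← sq_abs]
          exact pow_le_pow_left₀ (abs_nonneg _) hdp 2
        have h1 := (hα n).2.1 τ
        rw [hFn]
        rw [abs_of_nonneg (mul_nonneg h1.1 (sq_nonneg _))]
        nlinarith [sq_nonneg (dotProduct x (pev j₀ h ω τ)), h1.1, h1.2]
      have hFint : ∀ c e : ℝ, IntervalIntegrable Fn volume c e :=
        fun c e => intervalIntegrable_of_bound hFm B hFb c e
      have hFnn : ∀ τ, 0 ≤ Fn τ := fun τ => mul_nonneg ((hα n).2.1 τ).1 (sq_nonneg _)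
      set N := ⌊ν n * (b - a) / T⌋₊ with hNdef
      have hν := hν0 n
      have hba : (0:ℝ) ≤ b - a := sub_nonneg.2 hab
      have hNle : (N:ℝ) * T ≤ ν n * (b - a) := by
        have h1 : (N:ℝ) ≤ ν n * (b - a) / T := Nat.floor_le (by positivity)
        calc (N:ℝ) * T ≤ (ν n * (b - a) / T) * T := by nlinarith
          _ = ν n * (b - a) := by field_simp
      have hwin : (N : ℝ) * (ξ * ∑ i, (x i)^2) ≤ ∫ τ in (ν n * a)..(ν n * a + N * T), Fn τ := by
        have hadj := intervalIntegral.sum_integral_adjacent_intervals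
          (a := fun m : ℕ => ν n * a + m * T) (n := N) (μ := volume) (fun m _ => hFint _ _)
        simp only [Nat.cast_zero, zero_mul, add_zero] at hadj
        rw [← hadj]
        calc (N:ℝ) * (ξ * ∑ i, (x i)^2) = ∑ _m ∈ Finset.range N, (ξ * ∑ i, (x i)^2) := by
              rw [Finset.sum_const, Finset.card_range, nsmul_eq_mul]
          _ ≤ _ := by
              refine Finset.sum_le_sum fun m _ => ?_
              have ht0 : (0:ℝ) ≤ ν n * a + m * T := by positivity
              have heq : ν n * a + ((m+1 : ℕ):ℝ) * T = (ν n * a + (m:ℝ) * T) + T := by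
                push_cast; ring
              rw [heq]
              exact hξPE (α n) (hα n) (ν n * a + (m:ℝ) * T) ht0 x
      have h2r : ν n * a + (N:ℝ) * T ≤ ν n * b := by nlinarith
      have htail : 0 ≤ ∫ τ in (ν n * a + (N:ℝ) * T)..(ν n * b), Fn τ :=
        intervalIntegral.integral_nonneg h2r (fun τ _ => hFnn τ)
      have hsplit : (∫ τ in (ν n * a)..(ν n * a + (N:ℝ) * T), Fn τ)
          + ∫ τ in (ν n * a + (N:ℝ) * T)..(ν n * b), Fn τ
          = ∫ τ in (ν n * a)..(ν n * b), Fn τ :=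
        intervalIntegral.integral_add_adjacent_intervals (hFint _ _) (hFint _ _)
      have hbig : (N:ℝ) * (ξ * ∑ i, (x i)^2) ≤ ∫ τ in (ν n * a)..(ν n * b), Fn τ := by
        rw [← hsplit]; linarith
      have hsubst : (∫ s in a..b, Fn (ν n * s)) = (ν n)⁻¹ * ∫ τ in (ν n * a)..(ν n * b), Fn τ := by
        rw [intervalIntegral.integral_comp_mul_left Fn (ne_of_gt hν), smul_eq_mul]
      have hIccInt : (∫ t in Set.Icc a b, Fn (ν n * t)) = ∫ s in a..b, Fn (ν n * s) := by
        rw [intervalIntegral.integral_of_le hab, ← integral_Icc_eq_integral_Ioc]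
      show ((N:ℝ) / ν n) * (ξ * ∑ i, (x i)^2) ≤ ∫ t in Set.Icc a b, Fn (ν n * t)
      rw [hIccInt, hsubst]
      calc ((N:ℝ) / ν n) * (ξ * ∑ i, (x i)^2) = (ν n)⁻¹ * ((N:ℝ) * (ξ * ∑ i, (x i)^2)) := by
            ring
        _ ≤ (ν n)⁻¹ * ∫ τ in (ν n * a)..(ν n * b), Fn τ :=
            mul_le_mul_of_nonneg_left hbig (inv_nonneg.2 hν.le)
    -- the limit of the coefficients
    have hνφ : Tendsto (fun k => ν (φ k)) atTop atTop := hνtop.comp hφ.tendsto_atTop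
    have hclim : Tendsto (fun k => ((⌊ν (φ k) * (b - a) / T⌋₊ : ℝ) / ν (φ k))
        * (ξ * ∑ i, (x i)^2)) atTop (nhds (((b - a) / T) * (ξ * ∑ i, (x i)^2))) := by
      have hba : (0:ℝ) ≤ b - a := sub_nonneg.2 hab
      have hfl : Tendsto (fun k => ((⌊ν (φ k) * (b - a) / T⌋₊ : ℝ) / ν (φ k))) atTop
          (nhds ((b - a) / T)) := by
        have hlow : Tendsto (fun k => (b - a) / T - (ν (φ k))⁻¹) atTop (nhds ((b - a) / T)) := by
          have h0 := (tendsto_const_nhds (x := (b - a) / T) (f := atTop (α := ℕ))).sub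
            (tendsto_inv_atTop_zero.comp hνφ)
          simpa using h0
        refine tendsto_of_tendsto_of_tendsto_of_le_of_le hlow tendsto_const_nhds ?_ ?_
        · intro k
          have hν := hν0 (φ k)
          have h1 : ν (φ k) * (b - a) / T - 1 ≤ (⌊ν (φ k) * (b - a) / T⌋₊ : ℝ) :=
            (Nat.sub_one_lt_floor _).le
          calc (b - a) / T - (ν (φ k))⁻¹ = (ν (φ k) * (b - a) / T - 1) / ν (φ k) := by
                field_simp
            _ ≤ (⌊ν (φ k) * (b - a) / T⌋₊ : ℝ) / ν (φ k) := by gcongr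
        · intro k
          have hν := hν0 (φ k)
          have h1 : (⌊ν (φ k) * (b - a) / T⌋₊ : ℝ) ≤ ν (φ k) * (b - a) / T :=
            Nat.floor_le (by positivity)
          calc (⌊ν (φ k) * (b - a) / T⌋₊ : ℝ) / ν (φ k) ≤ (ν (φ k) * (b - a) / T) / ν (φ k) := by
                gcongr
            _ = (b - a) / T := by field_simp
      exact hfl.mul_const _
    have hC : ((b - a) / T) * (ξ * ∑ i, (x i)^2)
        ≤ ∫ t in Set.Icc a b, ∑ i, ∑ j, x i * x j * C t i j :=
      le_of_tendsto_of_tendsto' hclim hTlim hGlb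
    have hswapDC : (∫ t in Set.Icc a b, ∑ i, ∑ j, x i * x j * D t i j)
        = ∫ t in Set.Icc a b, ∑ i, ∑ j, x i * x j * C t i j := by
      refine integral_congr_ae ?_
      filter_upwards [ae_restrict_of_ae_restrict_of_subset hsub hDC] with t ht
      exact Finset.sum_congr rfl fun i _ => Finset.sum_congr rfl fun j _ => by rw [ht i j]
    rw [hswapDC]
    exact hC
  -- Step 5 : Lebesgue differentiation
  have hdiff : ∀ x : Fin (2 * h + 1 - j₀) → ℝ, ∀ᵐ t ∂(volume : Measure ℝ),
      0 < t → (ξ / T) * (∑ i, (x i)^2) ≤ ∑ i, ∑ j, x i * x j * D t i j := by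
    intro x
    set q : ℝ → ℝ := fun t => ∑ i, ∑ j, x i * x j * D t i j with hq
    have hqm : Measurable q :=
      Finset.measurable_sum _ fun i _ => Finset.measurable_sum _ fun j _ =>
        ((hDmeas i j).const_mul _)
    have hqb : ∀ t, ‖q t‖ ≤ ‖(∑ i, ∑ j, |x i * x j| : ℝ)‖ := by
      intro t
      rw [Real.norm_eq_abs]
      refine le_trans (Finset.abs_sum_le_sum_abs _ _) ?_
      refine le_trans (Finset.sum_le_sum fun i _ => Finset.abs_sum_le_sum_abs _ _) ?_
      refine le_trans (Finset.sum_le_sum fun i _ => Finset.sum_le_sum fun j _ => ?_)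
        (le_abs_self _)
      rw [abs_mul]
      have h2 := hDb t i j
      nlinarith [abs_nonneg (x i * x j), abs_nonneg (D t i j)]
    have hqli : LocallyIntegrable q volume :=
      (locallyIntegrable_const _).mono hqm.aestronglyMeasurable (Eventually.of_forall hqb)
    have havg := IsUnifLocDoublingMeasure.ae_tendsto_average (μ := (volume : Measure ℝ)) hqli 1
    filter_upwards [havg] with t ht htpos
    have h2 : Tendsto (fun r : ℝ => ⨍ y in Metric.closedBall t r, q y) (nhdsWithin 0 (Set.Ioi 0))
        (nhds (q t)) := by
      refine ht (fun _ => t) id tendsto_id ?_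
      filter_upwards [self_mem_nhdsWithin] with r hr
      simp only [Metric.mem_closedBall, dist_self, one_mul]
      exact le_of_lt hr
    refine ge_of_tendsto h2 ?_
    have hmem : Set.Ioo (0:ℝ) t ∈ nhdsWithin (0:ℝ) (Set.Ioi 0) :=
      Ioo_mem_nhdsGT htpos
    filter_upwards [hmem] with r hr
    obtain ⟨hr0, hrt⟩ := hr
    have hk := hkey x (t - r) (t + r) (by linarith) (by linarith)
    have h2r : t + r - (t - r) = 2 * r := by ring
    rw [h2r] at hk
    rw [setAverage_eq, Real.closedBall_eq_Icc, Real.volume_real_Icc,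
      show t + r - (t - r) = 2 * r from by ring,
      max_eq_left (by positivity : (0:ℝ) ≤ 2 * r), smul_eq_mul]
    calc (ξ / T) * (∑ i, (x i)^2) = (2 * r)⁻¹ * ((2 * r / T) * (ξ * ∑ i, (x i)^2)) := by
          field_simp
      _ ≤ (2 * r)⁻¹ * ∫ y in Set.Icc (t - r) (t + r), q y :=
          mul_le_mul_of_nonneg_left hk (by positivity)
  -- Step 6 : assemble
  have hQ : ∀ᵐ t ∂(volume.restrict (Set.Ici (0:ℝ))),
      ∀ xq : Fin (2 * h + 1 - j₀) → ℚ,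
        (ξ / T) * (∑ i, ((xq i : ℝ))^2) ≤ ∑ i, ∑ j, (xq i : ℝ) * (xq j : ℝ) * D t i j := by
    rw [ae_all_iff]
    intro xq
    have hne : ∀ᵐ t ∂(volume.restrict (Set.Ici (0:ℝ))), t ≠ 0 := by
      rw [ae_iff]
      have hset : {t : ℝ | ¬ t ≠ 0} = {0} := by ext u; simp
      rw [hset]
      exact le_antisymm (le_trans (Measure.restrict_apply_le _ _) (by simp)) bot_le
    filter_upwards [ae_restrict_of_ae (hdiff (fun i => (xq i : ℝ))),
      ae_restrict_mem measurableSet_Ici, hne] with t h1 h2 h3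
    exact h1 (lt_of_le_of_ne h2 (Ne.symm h3))
  filter_upwards [hQ, hDC] with t hQt hDCt x
  have hcont : Continuous (fun y : Fin (2 * h + 1 - j₀) → ℝ =>
      (∑ i, ∑ j, y i * y j * D t i j) - (ξ / T) * ∑ i, (y i)^2) := by
    apply Continuous.sub
    · exact continuous_finset_sum _ fun i _ => continuous_finset_sum _ fun j _ =>
        (((continuous_apply i).mul (continuous_apply j)).mul continuous_const)
    · exact continuous_const.mul (continuous_finset_sum _ fun i _ => ((continuous_apply i).pow 2))
  have hΦnn : 0 ≤ (∑ i, ∑ j, x i * x j * D t i j) - (ξ / T) * ∑ i, (x i)^2 := by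
    have hrseq : ∀ n0 : ℕ, ∃ r : Fin (2 * h + 1 - j₀) → ℚ,
        ∀ i, |x i - (r i : ℝ)| < 1 / (n0 + 1) := by
      intro n0
      choose r hr using fun i => exists_rat_near (x i) (show (0:ℝ) < 1 / (n0 + 1) by positivity)
      exact ⟨r, hr⟩
    choose r hr using hrseq
    have hconv : Tendsto (fun n0 => fun i => ((r n0 i : ℝ))) atTop (nhds x) := by
      rw [tendsto_pi_nhds]
      intro i
      have h0 : Tendsto (fun n0 : ℕ => x i - (x i - (r n0 i : ℝ))) atTop (nhds (x i - 0)) :=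
        tendsto_const_nhds.sub (squeeze_zero_norm (fun n0 => (hr n0 i).le)
          tendsto_one_div_add_atTop_nhds_zero_nat)
      simpa using h0
    refine ge_of_tendsto ((hcont.tendsto x).comp hconv) (Eventually.of_forall fun n0 => ?_)
    simp only [Function.comp_apply]
    exact sub_nonneg.2 (hQt (r n0))
  have hfin : (ξ / T) * (∑ i, (x i)^2) ≤ ∑ i, ∑ j, x i * x j * D t i j := sub_nonneg.1 hΦnn
  have hDCsum : ∑ i, ∑ j, x i * x j * D t i j = ∑ i, ∑ j, x i * x j * C t i j :=
    Finset.sum_congr rfl fun i _ => Finset.sum_congr rfl fun j _ => by rw [hDCt i j]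
  have hdot : dotProduct x ((C t).mulVec x) = ∑ i, ∑ j, x i * x j * C t i j := by
    simp only [dotProduct, Matrix.mulVec, Finset.mul_sum]
    exact Finset.sum_congr rfl fun i _ => Finset.sum_congr rfl fun j _ => by ring
  rw [hdot, ← hDCsum]
  exact hfin

end
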